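/- Let a, b, c be pairwise coprime integers with 1 < a < b < c and (a,b,c) ≠ (2,3,5), and set N = abc − ab − ac − bc. Let e₀, p₁, p₂, p₃ be the unique integers with 0 < p₁ < a, 0 < p₂ < b, 0 < p₃ < c and abc·e₀ + p₁·bc + p₂·ac + p₃·ab = −1; define Δ(n) = 1 − e₀·n − ⌈p₁n/a⌉ − ⌈p₂n/b⌉ − ⌈p₃n/c⌉ and τ(i) = Σ_{n=0}^{i−1} Δ(n). Then τ(n+1) ≤ 1 for all integers n with 0 ≤ n ≤ N. -/

import Mathlib

lemma ceil_helper (u v : ℤ) (hv : 0 < v) :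
    v * ⌈(u : ℚ) / (v : ℚ)⌉ = u + (-u) % v := by
  have hv' : ((v.toNat : ℕ) : ℤ) = v := Int.toNat_of_nonneg hv.le
  have hc : ((v.toNat : ℕ) : ℚ) = (v : ℚ) := by exact_mod_cast hv'
  have hfl := Rat.floor_intCast_div_natCast (-u) v.toNat
  rw [hc, hv'] at hfl
  have h1 : ⌈(u : ℚ) / (v : ℚ)⌉ = -((-u) / v) := by
    rw [← hfl, show (((-u : ℤ)) : ℚ) / (v : ℚ) = -((u : ℚ) / (v : ℚ)) by push_cast; ring,
      Int.floor_neg, neg_neg]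
  have h2 := Int.mul_ediv_add_emod (-u) v
  rw [h1]
  linarith

/-- semigroup membership -/
def SGS (a b c m : ℤ) : Prop :=
  ∃ x y z : ℤ, 0 ≤ x ∧ 0 ≤ y ∧ 0 ≤ z ∧ m = x * (b * c) + y * (a * c) + z * (a * b)

set_option maxHeartbeats 1000000 in
theorem tau_le_one (a b c : ℤ)
    (hab : IsCoprime a b) (hac : IsCoprime a c) (hbc : IsCoprime b c)
    (h1a : 1 < a) (hab' : a < b) (hbc' : b < c)
    (hne : (a, b, c) ≠ (2, 3, 5))
    (N : ℤ) (hN : N = a * b * c - a * b - a * c - b * c)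
    (e₀ p₁ p₂ p₃ : ℤ)
    (hp₁ : 0 < p₁ ∧ p₁ < a) (hp₂ : 0 < p₂ ∧ p₂ < b) (hp₃ : 0 < p₃ ∧ p₃ < c)
    (heq : a * b * c * e₀ + p₁ * (b * c) + p₂ * (a * c) + p₃ * (a * b) = -1)
    (Δ : ℕ → ℤ)
    (hΔ : ∀ n : ℕ, Δ n = 1 - e₀ * (n : ℤ)
      - ⌈((p₁ : ℚ) * (n : ℚ)) / (a : ℚ)⌉
      - ⌈((p₂ : ℚ) * (n : ℚ)) / (b : ℚ)⌉
      - ⌈((p₃ : ℚ) * (n : ℚ)) / (c : ℚ)⌉)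
    (τ : ℕ → ℤ)
    (hτ : ∀ i : ℕ, τ i = ∑ n ∈ Finset.range i, Δ n)
    (n : ℕ) (hn : (n : ℤ) ≤ N) :
    τ (n + 1) ≤ 1 := by
  classical
  obtain ⟨hp1pos, hp1lt⟩ := hp₁
  obtain ⟨hp2pos, hp2lt⟩ := hp₂
  obtain ⟨hp3pos, hp3lt⟩ := hp₃
  have ha : (0:ℤ) < a := by linarith
  have hb : (0:ℤ) < b := by linarith
  have hc : (0:ℤ) < c := by linarith
  have habc : (0:ℤ) < a * b * c := by positivity
  have hNabc : N < a * b * c := by nlinarith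
  have hN0 : (0:ℤ) ≤ N := le_trans (Int.ofNat_nonneg n) hn
  -- divisibility facts
  obtain ⟨k₁, hk₁⟩ : a ∣ (p₁ * (b * c) + 1) :=
    ⟨-(b * c * e₀ + p₂ * c + p₃ * b), by linarith [heq]⟩
  obtain ⟨k₂, hk₂⟩ : b ∣ (p₂ * (a * c) + 1) :=
    ⟨-(a * c * e₀ + p₁ * c + p₃ * a), by linarith [heq]⟩
  obtain ⟨k₃, hk₃⟩ : c ∣ (p₃ * (a * b) + 1) :=
    ⟨-(a * b * e₀ + p₁ * b + p₂ * a), by linarith [heq]⟩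
  -- the Delta formula
  have dform : ∀ m : ℕ, Δ m * (a * b * c) =
      a * b * c + (m : ℤ) -
        ((-(p₁ * m)) % a * (b * c) + (-(p₂ * m)) % b * (a * c) + (-(p₃ * m)) % c * (a * b)) := by
    intro m
    have h1 := ceil_helper (p₁ * m) a ha
    have h2 := ceil_helper (p₂ * m) b hb
    have h3 := ceil_helper (p₃ * m) c hc
    have c1 : ((p₁ * (m : ℤ) : ℤ) : ℚ) = (p₁ : ℚ) * (m : ℚ) := by push_cast; ring
    have c2 : ((p₂ * (m : ℤ) : ℤ) : ℚ) = (p₂ : ℚ) * (m : ℚ) := by push_cast; ring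
    have c3 : ((p₃ * (m : ℤ) : ℤ) : ℚ) = (p₃ : ℚ) * (m : ℚ) := by push_cast; ring
    rw [c1] at h1; rw [c2] at h2; rw [c3] at h3
    rw [hΔ m]
    linear_combination (-(b * c)) * h1 - (a * c) * h2 - (a * b) * h3 - (m : ℤ) * heq
  -- residue basics
  have r1 : ∀ m : ℕ, 0 ≤ (-(p₁ * m)) % a ∧ (-(p₁ * m)) % a < a :=
    fun m => ⟨Int.emod_nonneg _ (ne_of_gt ha), Int.emod_lt_of_pos _ ha⟩
  have r2 : ∀ m : ℕ, 0 ≤ (-(p₂ * m)) % b ∧ (-(p₂ * m)) % b < b :=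
    fun m => ⟨Int.emod_nonneg _ (ne_of_gt hb), Int.emod_lt_of_pos _ hb⟩
  have r3 : ∀ m : ℕ, 0 ≤ (-(p₃ * m)) % c ∧ (-(p₃ * m)) % c < c :=
    fun m => ⟨Int.emod_nonneg _ (ne_of_gt hc), Int.emod_lt_of_pos _ hc⟩
  -- congruence pinning: if a ∣ (-(p₁ m) - x) and 0 ≤ x < a then residue = x
  have pin : ∀ (v d x : ℤ), 0 < d → 0 ≤ x → x < d → d ∣ (v - x) → v % d = x := by
    intro v d x hd hx0 hxd ⟨w, hw⟩
    have : v % d = x % d := Int.emod_eq_emod_iff_emod_sub_eq_zero.mpr (by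
      rw [hw]; exact Int.mul_emod_right d w)
    rw [this, Int.emod_eq_of_lt hx0 hxd]
  -- Δ = 1 on semigroup elements
  have delta_one : ∀ m : ℕ, (m : ℤ) ≤ N → SGS a b c m → Δ m = 1 := by
    intro m hm ⟨x, y, z, hx, hy, hz, hrep⟩
    have hy' := mul_nonneg hy (mul_pos ha hc).le
    have hz' := mul_nonneg hz (mul_pos ha hb).le
    have hx' := mul_nonneg hx (mul_pos hb hc).le
    have hxa : x < a := lt_of_mul_lt_mul_right (a := b * c) (by linarith) (mul_pos hb hc).le
    have hyb : y < b := lt_of_mul_lt_mul_right (a := a * c) (by linarith) (mul_pos ha hc).le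
    have hzc : z < c := lt_of_mul_lt_mul_right (a := a * b) (by linarith) (mul_pos ha hb).le
    have e1 : (-(p₁ * m)) % a = x :=
      pin _ _ _ ha hx hxa ⟨-(x * k₁) - p₁ * y * c - p₁ * z * b, by
        rw [hrep]; linear_combination (-x) * hk₁⟩
    have e2 : (-(p₂ * m)) % b = y :=
      pin _ _ _ hb hy hyb ⟨-(y * k₂) - p₂ * x * c - p₂ * z * a, by
        rw [hrep]; linear_combination (-y) * hk₂⟩
    have e3 : (-(p₃ * m)) % c = z :=
      pin _ _ _ hc hz hzc ⟨-(z * k₃) - p₃ * x * b - p₃ * y * a, by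
        rw [hrep]; linear_combination (-z) * hk₃⟩
    have := dform m
    rw [e1, e2, e3] at this
    have : Δ m * (a * b * c) = 1 * (a * b * c) := by rw [this, hrep]; ring
    exact mul_right_cancel₀ (ne_of_gt habc) this
  -- Δ = -1 when N - m is in the semigroup
  have delta_neg : ∀ m : ℕ, (m : ℤ) ≤ N → SGS a b c (N - m) → Δ m = -1 := by
    intro m hm ⟨x, y, z, hx, hy, hz, hrep⟩
    have hm0 : (0:ℤ) ≤ (m:ℤ) := Int.ofNat_nonneg m
    have hy' := mul_nonneg hy (mul_pos ha hc).le
    have hz' := mul_nonneg hz (mul_pos ha hb).le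
    have hx' := mul_nonneg hx (mul_pos hb hc).le
    have hxa : x < a := lt_of_mul_lt_mul_right (a := b * c) (by linarith) (mul_pos hb hc).le
    have hyb : y < b := lt_of_mul_lt_mul_right (a := a * c) (by linarith) (mul_pos ha hc).le
    have hzc : z < c := lt_of_mul_lt_mul_right (a := a * b) (by linarith) (mul_pos ha hb).le
    have e1 : (-(p₁ * m)) % a = a - 1 - x :=
      pin _ _ _ ha (by linarith) (by linarith) ⟨(1 + x) * k₁ - p₁ * b * c + p₁ * b + p₁ * c
          + p₁ * y * c + p₁ * z * b - 1, by
        have hrep' : (m : ℤ) = N - (x * (b * c) + y * (a * c) + z * (a * b)) := by linarith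
        rw [hrep', hN]; linear_combination (1 + x) * hk₁⟩
    have e2 : (-(p₂ * m)) % b = b - 1 - y :=
      pin _ _ _ hb (by linarith) (by linarith) ⟨(1 + y) * k₂ - p₂ * a * c + p₂ * a + p₂ * c
          + p₂ * x * c + p₂ * z * a - 1, by
        have hrep' : (m : ℤ) = N - (x * (b * c) + y * (a * c) + z * (a * b)) := by linarith
        rw [hrep', hN]; linear_combination (1 + y) * hk₂⟩
    have e3 : (-(p₃ * m)) % c = c - 1 - z :=
      pin _ _ _ hc (by linarith) (by linarith) ⟨(1 + z) * k₃ - p₃ * a * b + p₃ * a + p₃ * b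
          + p₃ * x * b + p₃ * y * a - 1, by
        have hrep' : (m : ℤ) = N - (x * (b * c) + y * (a * c) + z * (a * b)) := by linarith
        rw [hrep', hN]; linear_combination (1 + z) * hk₃⟩
    have hd := dform m
    rw [e1, e2, e3] at hd
    have : Δ m * (a * b * c) = (-1) * (a * b * c) := by
      rw [hd]; linear_combination hN - hrep
    exact mul_right_cancel₀ (ne_of_gt habc) this
  -- Δ ≤ 1 and Δ = 1 → membership
  have delta_le : ∀ m : ℕ, (m : ℤ) ≤ N → Δ m ≤ 1 ∧ (Δ m = 1 → SGS a b c m) := by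
    intro m hm
    have hd := dform m
    obtain ⟨a1, a2⟩ := r1 m; obtain ⟨b1, b2⟩ := r2 m; obtain ⟨c1, c2⟩ := r3 m
    have hM0 : 0 ≤ (-(p₁ * m)) % a * (b * c) + (-(p₂ * m)) % b * (a * c) + (-(p₃ * m)) % c * (a * b) := by
      have := mul_nonneg a1 (le_of_lt (mul_pos hb hc))
      have := mul_nonneg b1 (le_of_lt (mul_pos ha hc))
      have := mul_nonneg c1 (le_of_lt (mul_pos ha hb))
      linarith
    constructor
    · nlinarith [hd, hM0, hNabc]
    · intro h1
      rw [h1, one_mul] at hd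
      exact ⟨_, _, _, a1, b1, c1, by linarith⟩
  -- exclusivity
  have excl : ∀ m : ℕ, (m : ℤ) ≤ N → ¬(SGS a b c m ∧ SGS a b c (N - m)) := by
    intro m hm ⟨h1, h2⟩
    have := delta_one m hm h1
    have := delta_neg m hm h2
    omega
  -- pointwise bound
  have point : ∀ m : ℕ, (m : ℤ) ≤ N →
      Δ m ≤ (if SGS a b c m then (1:ℤ) else 0) - (if SGS a b c (N - m) then (1:ℤ) else 0) := by
    intro m hm
    by_cases h1 : SGS a b c m
    · have h2 : ¬ SGS a b c (N - m) := fun h => excl m hm ⟨h1, h⟩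
      simp [h1, h2, delta_one m hm h1]
    · by_cases h2 : SGS a b c (N - m)
      · simp [h1, h2, delta_neg m hm h2]
      · obtain ⟨hle, him⟩ := delta_le m hm
        have : Δ m ≠ 1 := fun h => h1 (him h)
        simp [h1, h2]
        omega
  -- sum bound
  rw [hτ]
  have hsum : ∑ m ∈ Finset.range (n + 1), Δ m ≤
      ∑ m ∈ Finset.range (n + 1),
        ((if SGS a b c m then (1:ℤ) else 0) - (if SGS a b c (N - m) then (1:ℤ) else 0)) := by
    apply Finset.sum_le_sum
    intro m hm
    apply point
    have : m ≤ n := Nat.lt_succ_iff.mp (Finset.mem_range.mp hm)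
    have : (m : ℤ) ≤ (n : ℤ) := Int.ofNat_le.mpr this
    linarith
  rw [Finset.sum_sub_distrib] at hsum
  rw [Finset.sum_boole, Finset.sum_boole] at hsum
  -- counting
  set P := (Finset.range (n + 1)).filter (fun m : ℕ => SGS a b c (m : ℤ)) with hP
  set Q := (Finset.range (n + 1)).filter (fun m : ℕ => SGS a b c (N - (m : ℤ))) with hQ
  have hcard : P.card ≤ Q.card + 1 := by
    have hsub : P ⊆ insert 0 (P.erase 0) := by
      intro m hm
      by_cases h : m = 0
      · simp [h]
      · exact Finset.mem_insert_of_mem (Finset.mem_erase.mpr ⟨h, hm⟩)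
    have h1 : P.card ≤ (P.erase 0).card + 1 :=
      le_trans (Finset.card_le_card hsub) (Finset.card_insert_le _ _)
    have h2 : (P.erase 0).card ≤ Q.card := by
      rcases eq_or_lt_of_le hn with heqN | hltN
      · -- n = N : map m ↦ n - m
        apply Finset.card_le_card_of_injOn (fun m => n - m)
        · intro m hm
          obtain ⟨hm0, hmP⟩ := Finset.mem_erase.mp hm
          obtain ⟨hmr, hmS⟩ := Finset.mem_filter.mp hmP
          have hmn : m ≤ n := Nat.lt_succ_iff.mp (Finset.mem_range.mp hmr)
          refine Finset.mem_filter.mpr ⟨Finset.mem_range.mpr (by dsimp only; omega), ?_⟩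
          have hcst : N - ((n - m : ℕ) : ℤ) = (m : ℤ) := by
            rw [Nat.cast_sub hmn, ← heqN]; ring
          rw [hcst]; exact hmS
        · intro m hm m' hm' hEq
          have h1' := Finset.mem_range.mp (Finset.mem_filter.mp (Finset.mem_erase.mp hm).2).1
          have h2' := Finset.mem_range.mp (Finset.mem_filter.mp (Finset.mem_erase.mp hm').2).1
          have hEq' : n - m = n - m' := hEq
          omega
      · -- n < N : use the maximal small semigroup element
        set L : ℕ := (N - n).toNat with hL
        have hL1 : 1 ≤ L := by omega
        set D := (Finset.range L).filter (fun t : ℕ => SGS a b c (t : ℤ)) with hD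
        have hD0 : (0 : ℕ) ∈ D := by
          refine Finset.mem_filter.mpr ⟨Finset.mem_range.mpr (by omega), ?_⟩
          exact ⟨0, 0, 0, le_refl 0, le_refl 0, le_refl 0, by push_cast; ring⟩
        have hDne : D.Nonempty := ⟨0, hD0⟩
        set s' := D.max' hDne with hs'
        have hs'S : SGS a b c (s' : ℤ) := (Finset.mem_filter.mp (D.max'_mem hDne)).2
        have hs'lt : (s' : ℤ) ≤ N - n - 1 := by
          have := Finset.mem_range.mp (Finset.mem_filter.mp (D.max'_mem hDne)).1
          omega
        have hs'max : ∀ t ∈ D, t ≤ s' := fun t ht => D.le_max' t ht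
        apply Finset.card_le_card_of_injOn (fun m : ℕ => (N - (s' : ℤ) - (m : ℤ)).toNat)
        · intro m hm
          obtain ⟨hm0, hmP⟩ := Finset.mem_erase.mp hm
          obtain ⟨hmr, hmS⟩ := Finset.mem_filter.mp hmP
          have hmn : m ≤ n := Nat.lt_succ_iff.mp (Finset.mem_range.mp hmr)
          have hmn' : (m : ℤ) ≤ n := Int.ofNat_le.mpr hmn
          have hm0' : 1 ≤ m := Nat.one_le_iff_ne_zero.mpr hm0
          have hm0'' : (1 : ℤ) ≤ (m : ℤ) := by exact_mod_cast hm0'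
          have hsumS : SGS a b c ((s' : ℤ) + m) := by
            obtain ⟨x, y, z, hx, hy, hz, h⟩ := hs'S
            obtain ⟨x', y', z', hx', hy', hz', h'⟩ := hmS
            exact ⟨x + x', y + y', z + z', by linarith, by linarith, by linarith, by
              rw [h, h']; ring⟩
          have hlb : N - n ≤ (s' : ℤ) + m := by
            by_contra hcon
            push_neg at hcon
            have hsm : ((s' + m : ℕ) : ℤ) = (s' : ℤ) + m := by push_cast; ring
            have hmem : (s' + m : ℕ) ∈ D := by
              refine Finset.mem_filter.mpr ⟨Finset.mem_range.mpr (by omega), ?_⟩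
              rw [hsm]; exact hsumS
            have := hs'max _ hmem
            omega
          have hub : (s' : ℤ) + m ≤ N - 1 := by linarith
          have hNsm : (0:ℤ) ≤ N - s' - m := by linarith
          have hcast : (((N - s' - m).toNat : ℕ) : ℤ) = N - (s' : ℤ) - m :=
            Int.toNat_of_nonneg hNsm
          refine Finset.mem_filter.mpr ⟨Finset.mem_range.mpr (by dsimp only; omega), ?_⟩
          have hrw : N - (((N - s' - m).toNat : ℕ) : ℤ) = (s' : ℤ) + m := by rw [hcast]; ring
          rw [hrw]; exact hsumS
        · intro m hm m' hm' hEq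
          obtain ⟨_, hmP⟩ := Finset.mem_erase.mp hm
          obtain ⟨_, hmP'⟩ := Finset.mem_erase.mp hm'
          have h1' : m ≤ n := Nat.lt_succ_iff.mp (Finset.mem_range.mp (Finset.mem_filter.mp hmP).1)
          have h2' : m' ≤ n := Nat.lt_succ_iff.mp (Finset.mem_range.mp (Finset.mem_filter.mp hmP').1)
          have hEq' : (N - (s' : ℤ) - (m : ℤ)).toNat = (N - (s' : ℤ) - (m' : ℤ)).toNat := hEq
          omega
    omega
  have hfin : ((P.card : ℤ)) ≤ (Q.card : ℤ) + 1 := by exact_mod_cast hcard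
  linarith [hsum, hfin]
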